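/- arXiv:2209.06819 — 4 statements merged into one kernel-verified Lean document; each statement's English description precedes it below -/
import Mathlib

section
/- In an abstract labelled conflict structure modelling CMV+ choices, there is no ⋆-pattern: there do not exist five steps a,b,c,d,e, each labelled by an unordered interaction between two distinct choices where each choice sits on one of two dual endpoints x or y and every interaction connects an x-choice with a y-choice, such that consecutive steps in the cycle a,b,c,d,e,a share exactly one choice (are in conflict) while non-consecutive steps share no choice. -/
/-- the set of choices involved in a step (modelled as a pair of choices) -/
def ChoiceSet {C : Type*} (s : C × C) : Set C := {s.1, s.2}

/-- a valid CMV+ step: two distinct choices on dual endpoints -/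
def ValidStep {C : Type*} (ep : C → Bool) (s : C × C) : Prop :=
  s.1 ≠ s.2 ∧ ep s.1 ≠ ep s.2

/-- two steps share exactly one choice (are in conflict) -/
def SharesExactlyOne {C : Type*} (s t : C × C) : Prop :=
  ∃! c, c ∈ ChoiceSet s ∩ ChoiceSet t

/-- two steps are distributable: they share no choice -/
def Distributable {C : Type*} (s t : C × C) : Prop :=
  ChoiceSet s ∩ ChoiceSet t = ∅

lemma ep_ne_of_mem {C : Type*} {ep : C → Bool} {s : C × C} (hv : ValidStep ep s)
    {c d : C} (hc : c ∈ ChoiceSet s) (hd : d ∈ ChoiceSet s) (hcd : c ≠ d) :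
    ep c ≠ ep d := by
  simp only [ChoiceSet, Set.mem_insert_iff, Set.mem_singleton_iff] at hc hd
  rcases hc with rfl | rfl <;> rcases hd with rfl | rfl <;>
    first | exact absurd rfl hcd | exact hv.2 | exact hv.2.symm

lemma ne_of_distrib {C : Type*} {s t : C × C} (h : Distributable s t)
    {c d : C} (hc : c ∈ ChoiceSet s) (hd : d ∈ ChoiceSet t) : c ≠ d := by
  rintro rfl
  exact Set.eq_empty_iff_forall_notMem.mp h c ⟨hc, hd⟩

theorem no_star_pattern_in_CMVmix {C : Type*} (ep : C → Bool)
    (sa sb sc sd se : C × C)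
    (hva : ValidStep ep sa) (hvb : ValidStep ep sb) (hvc : ValidStep ep sc)
    (hvd : ValidStep ep sd) (hve : ValidStep ep se)
    (hab : SharesExactlyOne sa sb) (hbc : SharesExactlyOne sb sc)
    (hcd : SharesExactlyOne sc sd) (hde : SharesExactlyOne sd se)
    (hea : SharesExactlyOne se sa)
    (hac : Distributable sa sc) (had : Distributable sa sd)
    (hbd : Distributable sb sd) (hbe : Distributable sb se)
    (hce : Distributable sc se) :
    False := by
  obtain ⟨c1, ⟨h1a, h1b⟩, -⟩ := hab
  obtain ⟨c2, ⟨h2b, h2c⟩, -⟩ := hbc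
  obtain ⟨c3, ⟨h3c, h3d⟩, -⟩ := hcd
  obtain ⟨c4, ⟨h4d, h4e⟩, -⟩ := hde
  obtain ⟨c5, ⟨h5e, h5a⟩, -⟩ := hea
  -- distinctness of consecutive shared choices
  have n12 : c1 ≠ c2 := ne_of_distrib hac h1a h2c
  have n23 : c2 ≠ c3 := ne_of_distrib hbd h2b h3d
  have n34 : c3 ≠ c4 := ne_of_distrib hce h3c h4e
  have n45 : c4 ≠ c5 := (ne_of_distrib had h5a h4d).symm
  have n51 : c5 ≠ c1 := (ne_of_distrib hbe h1b h5e).symm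
  -- parity around the cycle
  have e1 : ep c1 ≠ ep c2 := ep_ne_of_mem hvb h1b h2b n12
  have e2 : ep c2 ≠ ep c3 := ep_ne_of_mem hvc h2c h3c n23
  have e3 : ep c3 ≠ ep c4 := ep_ne_of_mem hvd h3d h4d n34
  have e4 : ep c4 ≠ ep c5 := ep_ne_of_mem hve h4e h5e n45
  have e5 : ep c5 ≠ ep c1 := ep_ne_of_mem hva h5a h1a n51
  have : ∀ a b c d e : Bool, a ≠ b → b ≠ c → c ≠ d → d ≠ e → e ≠ a → False := by
    intro a b c d e h1 h2 h3 h4 h5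
    cases a <;> cases b <;> cases c <;> cases d <;> cases e <;>
      first | exact h1 rfl | exact h2 rfl | exact h3 rfl | exact h4 rfl | exact h5 rfl
  exact this _ _ _ _ _ e1 e2 e3 e4 e5
end

section
/- Composition of operational correspondence: if encodings e₁ : S → M and e₂ : M → T are each operationally complete and sound (up to equivalences that are reduction bisimulations compatible with the encodings), then the composite encoding e₂ ∘ e₁ is operationally complete and sound. -/
variable {S M T : Type*}

/-- the equivalence is a weak reduction bisimulation -/
def RedBisim {P : Type*} (step : P → P → Prop) (eqv : P → P → Prop) : Prop :=
  ∀ p q, eqv p q → ∀ p', Relation.ReflTransGen step p p' →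
    ∃ q', Relation.ReflTransGen step q q' ∧ eqv p' q'

/-- operational completeness of an encoding up to a target equivalence -/
def OpComplete {A B : Type*} (stepA : A → A → Prop) (stepB : B → B → Prop)
    (eqv : B → B → Prop) (e : A → B) : Prop :=
  ∀ s s', Relation.ReflTransGen stepA s s' →
    ∃ t, Relation.ReflTransGen stepB (e s) t ∧ eqv t (e s')

/-- operational soundness of an encoding up to a target equivalence -/
def OpSound {A B : Type*} (stepA : A → A → Prop) (stepB : B → B → Prop)
    (eqv : B → B → Prop) (e : A → B) : Prop :=
  ∀ s t, Relation.ReflTransGen stepB (e s) t →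
    ∃ s' t', Relation.ReflTransGen stepA s s' ∧
      Relation.ReflTransGen stepB t t' ∧ eqv t' (e s')

theorem operational_correspondence_composes
    (stepS : S → S → Prop) (stepM : M → M → Prop) (stepT : T → T → Prop)
    (eqM : M → M → Prop) (eqT : T → T → Prop)
    (heqM : Equivalence eqM) (heqT : Equivalence eqT)
    (hbisM : RedBisim stepM eqM) (hbisT : RedBisim stepT eqT)
    (e₁ : S → M) (e₂ : M → T)
    (hc₁ : OpComplete stepS stepM eqM e₁) (hs₁ : OpSound stepS stepM eqM e₁)
    (hc₂ : OpComplete stepM stepT eqT e₂) (hs₂ : OpSound stepM stepT eqT e₂)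
    -- e₂ maps ≍_M-equivalent terms to ≍_T-equivalent terms
    (hresp : ∀ m m', eqM m m' → eqT (e₂ m) (e₂ m')) :
    OpComplete stepS stepT eqT (e₂ ∘ e₁) ∧ OpSound stepS stepT eqT (e₂ ∘ e₁) := by
  constructor
  · intro s s' hss
    obtain ⟨m, hm, hmeq⟩ := hc₁ s s' hss
    obtain ⟨t, ht, hteq⟩ := hc₂ (e₁ s) m hm
    exact ⟨t, ht, heqT.trans hteq (hresp _ _ hmeq)⟩
  · intro s t hst
    obtain ⟨m', t', hm', ht', hteq⟩ := hs₂ (e₁ s) t hst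
    obtain ⟨s', m'', hs', hm'', hmeq⟩ := hs₁ s m' hm'
    obtain ⟨u, hu, hueq⟩ := hc₂ m' m'' hm''
    obtain ⟨u', hu', huu'⟩ := hbisT (e₂ m') t' (heqT.symm hteq) u hu
    exact ⟨s', u', hs', ht'.trans hu',
      heqT.trans (heqT.symm huu') (heqT.trans hueq (hresp _ _ hmeq))⟩
end

section
/- Operational correspondence plus barb sensitiveness yields a coupled simulation: if an encoding e is operationally complete and sound up to an equivalence ≍ that is a barb-respecting weak reduction bisimulation, and e is barb-sensitive, then the relation R = {(s, t) | e(s) ⇒ ≍ t or t ⇒ ≍ e(s') for appropriate s ⇒ s'} containing all pairs (s, e(s)) can be chosen so that each source term and its translation are related by coupled simulations in both directions. -/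
variable {S T B : Type*}

def WeakBarb {P : Type*} (step : P → P → Prop) (barb : P → B → Prop)
    (p : P) (β : B) : Prop :=
  ∃ p', Relation.ReflTransGen step p p' ∧ barb p' β

/-- steps in the disjoint-union transition system of source and target -/
def SumStep (stepS : S → S → Prop) (stepT : T → T → Prop) :
    S ⊕ T → S ⊕ T → Prop
  | Sum.inl s, Sum.inl s' => stepS s s'
  | Sum.inr t, Sum.inr t' => stepT t t'
  | _, _ => False

/-- barbs in the disjoint-union system -/
def SumBarb (barbS : S → B → Prop) (barbT : T → B → Prop) :
    S ⊕ T → B → Prop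
  | Sum.inl s, β => barbS s β
  | Sum.inr t, β => barbT t β

/-- coupled simulation on the disjoint-union system -/
def CoupledSim {P : Type*} (step : P → P → Prop) (barb : P → B → Prop)
    (R : P → P → Prop) : Prop :=
  ∀ p q, R p q →
    (∀ p', Relation.ReflTransGen step p p' →
      ∃ q', Relation.ReflTransGen step q q' ∧ R p' q') ∧
    (∀ p', Relation.ReflTransGen step p p' →
      ∃ q', Relation.ReflTransGen step q q' ∧ R q' p') ∧
    (∀ β, WeakBarb step barb p β → WeakBarb step barb q β)

section Helpers

variable {stepS : S → S → Prop} {stepT : T → T → Prop}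

lemma rtg_of_inl {s : S} {p : S ⊕ T}
    (h : Relation.ReflTransGen (SumStep stepS stepT) (Sum.inl s) p) :
    ∃ s', p = Sum.inl s' ∧ Relation.ReflTransGen stepS s s' := by
  induction h with
  | refl => exact ⟨s, rfl, Relation.ReflTransGen.refl⟩
  | @tail b c _ hstep ih =>
    obtain ⟨s', rfl, hs⟩ := ih
    cases c with
    | inl s'' => exact ⟨s'', rfl, hs.tail hstep⟩
    | inr t => exact hstep.elim

lemma rtg_of_inr {t : T} {p : S ⊕ T}
    (h : Relation.ReflTransGen (SumStep stepS stepT) (Sum.inr t) p) :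
    ∃ t', p = Sum.inr t' ∧ Relation.ReflTransGen stepT t t' := by
  induction h with
  | refl => exact ⟨t, rfl, Relation.ReflTransGen.refl⟩
  | @tail b c _ hstep ih =>
    obtain ⟨t', rfl, ht⟩ := ih
    cases c with
    | inr t'' => exact ⟨t'', rfl, ht.tail hstep⟩
    | inl s => exact hstep.elim

lemma inl_rtg {s s' : S} (h : Relation.ReflTransGen stepS s s') :
    Relation.ReflTransGen (SumStep stepS stepT) (Sum.inl s) (Sum.inl s') := by
  induction h with
  | refl => exact Relation.ReflTransGen.refl
  | tail _ hstep ih => exact ih.tail hstep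

lemma inr_rtg {t t' : T} (h : Relation.ReflTransGen stepT t t') :
    Relation.ReflTransGen (SumStep stepS stepT) (Sum.inr t) (Sum.inr t') := by
  induction h with
  | refl => exact Relation.ReflTransGen.refl
  | tail _ hstep ih => exact ih.tail hstep

lemma weakBarb_inl {barbS : S → B → Prop} {barbT : T → B → Prop} {s : S} {β : B} :
    WeakBarb (SumStep stepS stepT) (SumBarb barbS barbT) (Sum.inl s) β ↔
      WeakBarb stepS barbS s β := by
  constructor
  · rintro ⟨p', hp, hb⟩
    obtain ⟨s', rfl, hs⟩ := rtg_of_inl hp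
    exact ⟨s', hs, hb⟩
  · rintro ⟨s', hs, hb⟩
    exact ⟨Sum.inl s', inl_rtg hs, hb⟩

lemma weakBarb_inr {barbS : S → B → Prop} {barbT : T → B → Prop} {t : T} {β : B} :
    WeakBarb (SumStep stepS stepT) (SumBarb barbS barbT) (Sum.inr t) β ↔
      WeakBarb stepT barbT t β := by
  constructor
  · rintro ⟨p', hp, hb⟩
    obtain ⟨t', rfl, ht⟩ := rtg_of_inr hp
    exact ⟨t', ht, hb⟩
  · rintro ⟨t', ht, hb⟩
    exact ⟨Sum.inr t', inr_rtg ht, hb⟩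

end Helpers

theorem correspondence_yields_coupled_similarity
    (stepS : S → S → Prop) (stepT : T → T → Prop)
    (barbS : S → B → Prop) (barbT : T → B → Prop)
    (e : S → T) (eqT : T → T → Prop) (heq : Equivalence eqT)
    -- ≍ is a barb-respecting weak reduction bisimulation on T
    (hbis : ∀ t u, eqT t u → ∀ t', Relation.ReflTransGen stepT t t' →
      ∃ u', Relation.ReflTransGen stepT u u' ∧ eqT t' u')
    (hbarb : ∀ t u, eqT t u → ∀ β,
      WeakBarb stepT barbT t β ↔ WeakBarb stepT barbT u β)
    -- operational completeness
    (hcomplete : ∀ s s', Relation.ReflTransGen stepS s s' →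
      ∃ t, Relation.ReflTransGen stepT (e s) t ∧ eqT t (e s'))
    -- operational soundness
    (hsound : ∀ s t, Relation.ReflTransGen stepT (e s) t →
      ∃ s' t', Relation.ReflTransGen stepS s s' ∧
        Relation.ReflTransGen stepT t t' ∧ eqT t' (e s'))
    -- barb sensitiveness
    (hsens : ∀ s β, WeakBarb stepS barbS s β ↔ WeakBarb stepT barbT (e s) β) :
    ∃ R₁ R₂ : S ⊕ T → S ⊕ T → Prop,
      CoupledSim (SumStep stepS stepT) (SumBarb barbS barbT) R₁ ∧
      CoupledSim (SumStep stepS stepT) (SumBarb barbS barbT) R₂ ∧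
      (∀ s, R₁ (Sum.inl s) (Sum.inr (e s))) ∧
      (∀ s, R₂ (Sum.inr (e s)) (Sum.inl s)) := by
  -- The single relation:
  --   inl s  R  inr t  iff  t ⇒ u ≍ e s   (t can commit to s)
  --   inr t  R  inl s  iff  e s ⇒ t₀ ≍ t  (t is an ≍-variant of a reduct of e s)
  set R : S ⊕ T → S ⊕ T → Prop := fun p q =>
    match p, q with
    | Sum.inl s, Sum.inr t => ∃ u, Relation.ReflTransGen stepT t u ∧ eqT u (e s)
    | Sum.inr t, Sum.inl s => ∃ t₀, Relation.ReflTransGen stepT (e s) t₀ ∧ eqT t₀ t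
    | _, _ => False with hR
  have hcs : CoupledSim (SumStep stepS stepT) (SumBarb barbS barbT) R := by
    rintro (s | t) (s2 | t2) hpq
    · exact hpq.elim
    · -- p = inl s, q = inr t, with t ⇒ u ≍ e s
      obtain ⟨u, htu, hue⟩ := hpq
      refine ⟨?_, ?_, ?_⟩
      · rintro p' hp'
        obtain ⟨s', rfl, hss'⟩ := rtg_of_inl hp'
        obtain ⟨v, hev, hve⟩ := hcomplete s s' hss'
        obtain ⟨w, huw, hvw⟩ := hbis (e s) u (heq.symm hue) v hev
        refine ⟨Sum.inr w, inr_rtg (htu.trans huw), ?_⟩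
        exact ⟨w, Relation.ReflTransGen.refl, heq.trans (heq.symm hvw) hve⟩
      · rintro p' hp'
        obtain ⟨s', rfl, hss'⟩ := rtg_of_inl hp'
        obtain ⟨v, hev, hve⟩ := hcomplete s s' hss'
        obtain ⟨w, huw, hvw⟩ := hbis (e s) u (heq.symm hue) v hev
        refine ⟨Sum.inr w, inr_rtg (htu.trans huw), ?_⟩
        -- need: e s' ⇒ t₀ ≍ w
        exact ⟨e s', Relation.ReflTransGen.refl,
          heq.symm (heq.trans (heq.symm hvw) hve)⟩
      · intro β hβ
        rw [weakBarb_inl] at hβ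
        rw [weakBarb_inr]
        have h1 : WeakBarb stepT barbT (e s) β := (hsens s β).mp hβ
        have h2 : WeakBarb stepT barbT u β := (hbarb u (e s) hue β).mpr h1
        obtain ⟨u', huu', hb⟩ := h2
        exact ⟨u', htu.trans huu', hb⟩
    · -- p = inr t, q = inl s, with e s ⇒ t₀ ≍ t
      obtain ⟨t₀, het₀, ht₀t⟩ := hpq
      refine ⟨?_, ?_, ?_⟩
      · rintro p' hp'
        obtain ⟨t₁, rfl, htt₁⟩ := rtg_of_inr hp'
        obtain ⟨t₁', ht₀t₁', ht₁t₁'⟩ := hbis t t₀ (heq.symm ht₀t) t₁ htt₁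
        refine ⟨Sum.inl s2, Relation.ReflTransGen.refl, ?_⟩
        exact ⟨t₁', het₀.trans ht₀t₁', heq.symm ht₁t₁'⟩
      · rintro p' hp'
        obtain ⟨t₁, rfl, htt₁⟩ := rtg_of_inr hp'
        obtain ⟨t₁', ht₀t₁', ht₁t₁'⟩ := hbis t t₀ (heq.symm ht₀t) t₁ htt₁
        obtain ⟨s₁, t₂, hss₁, ht₁'t₂, ht₂e⟩ := hsound s2 t₁' (het₀.trans ht₀t₁')
        obtain ⟨t₂', ht₁t₂', ht₂t₂'⟩ := hbis t₁' t₁ (heq.symm ht₁t₁') t₂ ht₁'t₂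
        refine ⟨Sum.inl s₁, inl_rtg hss₁, ?_⟩
        exact ⟨t₂', ht₁t₂', heq.trans (heq.symm ht₂t₂') ht₂e⟩
      · intro β hβ
        rw [weakBarb_inr] at hβ
        rw [weakBarb_inl]
        have h1 : WeakBarb stepT barbT t₀ β := (hbarb t₀ t ht₀t β).mpr hβ
        obtain ⟨t', ht₀t', hb⟩ := h1
        exact (hsens s2 β).mpr ⟨t', het₀.trans ht₀t', hb⟩
    · exact hpq.elim
  refine ⟨R, R, hcs, hcs, ?_, ?_⟩
  · intro s; exact ⟨e s, Relation.ReflTransGen.refl, heq.refl _⟩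
  · intro s; exact ⟨e s, Relation.ReflTransGen.refl, heq.refl _⟩
end

section
/- In the ⋆-pattern of Definition of synchronisation pattern ⋆, the conflict graph on the five steps {a,b,c,d,e} is exactly the 5-cycle, and any assignment of each step to a 2-element set of 'resources' such that steps conflict iff their resource sets intersect requires at least 5 distinct resources. -/
/-- cyclic adjacency on the 5-cycle of steps -/
def Adjacent (i j : Fin 5) : Prop := j = i + 1 ∨ j = i - 1

instance : ∀ i j : Fin 5, Decidable (Adjacent i j) := fun i j => by
  unfold Adjacent; infer_instance

lemma no_triangle : ∀ i j k : Fin 5, i ≠ j → i ≠ k → j ≠ k →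
    ¬(Adjacent i j ∧ Adjacent i k ∧ Adjacent j k) := by decide

theorem star_pattern_needs_five_resources {R : Type*} [DecidableEq R]
    (r : Fin 5 → Finset R)
    (hcard : ∀ i, (r i).card = 2)
    (hconf : ∀ i j : Fin 5, i ≠ j → ((r i ∩ r j).Nonempty ↔ Adjacent i j)) :
    5 ≤ (Finset.univ.biUnion r).card := by
  set S := Finset.univ.biUnion r with hS
  have hsub : ∀ i, r i ⊆ S := fun i => Finset.subset_biUnion_of_mem r (Finset.mem_univ i)
  have hsum : ∑ i : Fin 5, (r i).card = ∑ x ∈ S, (Finset.univ.filter (fun i => x ∈ r i)).card := by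
    have h1 : ∀ i : Fin 5, (r i).card = ∑ x ∈ S, (if x ∈ r i then 1 else 0) := by
      intro i
      rw [Finset.sum_ite_mem, Finset.inter_eq_right.mpr (hsub i), Finset.card_eq_sum_ones]
    simp_rw [h1]
    rw [Finset.sum_comm]
    congr 1
    ext x
    rw [Finset.card_filter]
  have hbound : ∀ x ∈ S, (Finset.univ.filter (fun i => x ∈ r i)).card ≤ 2 := by
    intro x _
    by_contra h
    push_neg at h
    obtain ⟨i, j, k, hi, hj, hk, hij, hik, hjk⟩ := Finset.two_lt_card_iff.mp h
    simp only [Finset.mem_filter] at hi hj hk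
    have adj : ∀ a b : Fin 5, a ≠ b → x ∈ r a → x ∈ r b → Adjacent a b := by
      intro a b hab ha hb
      exact (hconf a b hab).mp ⟨x, Finset.mem_inter.mpr ⟨ha, hb⟩⟩
    exact no_triangle i j k hij hik hjk
      ⟨adj i j hij hi.2 hj.2, adj i k hik hi.2 hk.2, adj j k hjk hj.2 hk.2⟩
  have h10 : (10 : ℕ) = ∑ i : Fin 5, (r i).card := by simp [hcard]
  have : (10 : ℕ) ≤ 2 * S.card := by
    rw [h10, hsum]
    calc ∑ x ∈ S, (Finset.univ.filter (fun i => x ∈ r i)).card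
        ≤ ∑ x ∈ S, 2 := Finset.sum_le_sum hbound
      _ = 2 * S.card := by rw [Finset.sum_const, smul_eq_mul, mul_comm]
  omega
end
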